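/- Let X be a countable alphabet, p a probability distribution on X, and X_1,...,X_n (n ≥ 2) i.i.d. samples from p with empirical estimator p̂_u = #{i ≤ n : X_i = u}/n. Let m be a positive even integer, d = m/2, and let c_{k,m,n} (1 ≤ k ≤ d) be nonnegative real coefficients satisfying the binomial central-moment identity. For δ_2 ∈ (0,1), define ε_n = √( (2/n)·log(1/δ_2) ) · ( sup_{q∈[0,1]} Σ_{k=1}^{d} c_{k,m,n} k (q(1−q))^{k−1}(1−2q) + Σ_{k=1}^{d} c_{k,m,n} k(k−1)/(n·2^{2k−3}) ). Then with probability at least 1 − δ_2, Σ_{u∈X} Σ_{k=1}^{d} c_{k,m,n} (p_u(1−p_u))^k ≤ (n/(n−1))^{d} · ( Σ_{u∈X} Σ_{k=1}^{d} c_{k,m,n} (p̂_u(1−p̂_u))^k + ε_n ). -/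

import Mathlib

open MeasureTheory ProbabilityTheory Finset

/-- The empirical (maximum likelihood) estimator `p̂_u = #{i ≤ n : X_i = u} / n`. -/
noncomputable def emp {𝒳 : Type*} [DecidableEq 𝒳] {Ω : Type*} {n : ℕ}
    (X : Fin n → Ω → 𝒳) (ω : Ω) (u : 𝒳) : ℝ :=
  ((Finset.univ.filter (fun i => X i ω = u)).card : ℝ) / n

/-- The coefficients `c k` (for `1 ≤ k ≤ d`) satisfy the binomial central-moment identity:
for every `θ ∈ [0,1]` and `Y ~ Bin(n, θ)`,
`E[(Y - nθ)^m] = ∑_{k=1}^d c k (θ(1-θ))^k`. -/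
def MomentIdentity (n m d : ℕ) (c : ℕ → ℝ) : Prop :=
  ∀ θ : ℝ, θ ∈ Set.Icc (0:ℝ) 1 →
    ∑ y ∈ Finset.range (n+1),
        (n.choose y : ℝ) * θ^y * (1-θ)^(n-y) * ((y:ℝ) - n*θ)^m
      = ∑ k ∈ Finset.Icc 1 d, c k * (θ*(1-θ))^k


/-- The McDiarmid correction term `ε_n` of Theorem 3 / Proposition 1. -/
noncomputable def epsN (n d : ℕ) (c : ℕ → ℝ) (δ₂ : ℝ) : ℝ :=
  Real.sqrt ((2/(n:ℝ)) * Real.log (1/δ₂)) *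
    ((⨆ q ∈ Set.Icc (0:ℝ) 1,
        ∑ k ∈ Finset.Icc 1 d, c k * k * (q*(1-q))^(k-1) * (1-2*q)) +
      ∑ k ∈ Finset.Icc 1 d, c k * k * ((k:ℝ)-1) / ((n:ℝ) * (2:ℝ)^(2*(k:ℤ)-3)))

/-- The data-dependent confidence bound `R_{δ₁,δ₂,m}(Xⁿ)` of Theorem 3, expressed as a
function of the empirical sum `S = ∑_u ∑_{k=1}^d c_k (p̂_u(1-p̂_u))^k`. -/
noncomputable def Rb (n d m : ℕ) (c : ℕ → ℝ) (δ₁ δ₂ : ℝ) (S : ℝ) : ℝ :=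
  (1/(n:ℝ)) * Real.sqrt ((n:ℝ)/((n:ℝ)-1)) *
    ((1/δ₁) * (S + epsN n d c δ₂)) ^ ((1:ℝ)/(m:ℝ))

/-- The empirical sum `∑_u ∑_{k=1}^d c_k (p̂_u(1-p̂_u))^k` appearing in `R_{δ₁,δ₂,m}`. -/
noncomputable def empSum {𝒳 : Type*} [DecidableEq 𝒳] {Ω : Type*} {n : ℕ}
    (d : ℕ) (c : ℕ → ℝ) (X : Fin n → Ω → 𝒳) (ω : Ω) : ℝ :=
  ∑' u, ∑ k ∈ Finset.Icc 1 d, c k * (emp X ω u * (1 - emp X ω u))^k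

section Helpers

lemma meas_ext_sing {α : Type*} [Countable α] [MeasurableSpace α] [MeasurableSingletonClass α]
    (μ ν : Measure α) (h : ∀ a, μ {a} = ν {a}) : μ = ν := by
  ext s hs
  have hsc : s.Countable := s.to_countable
  have hd : s.PairwiseDisjoint (fun a : α => ({a} : Set α)) :=
    fun a _ b _ hab => by simp [Set.disjoint_singleton, hab]
  have hm : ∀ a ∈ s, MeasurableSet ({a} : Set α) := fun a _ => measurableSet_singleton a
  rw [show s = ⋃ a ∈ s, {a} by simp, measure_biUnion hsc hd hm, measure_biUnion hsc hd hm]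
  exact tsum_congr fun a => by simp [h]

lemma meas_all_sets {α : Type*} [Countable α] [MeasurableSpace α] [MeasurableSingletonClass α]
    (s : Set α) : MeasurableSet s := s.to_countable.measurableSet

lemma integrable_of_bdd {α : Type*} [MeasurableSpace α] (μ : Measure α) [IsFiniteMeasure μ]
    {f : α → ℝ} (hf : Measurable f) {C : ℝ} (h : ∀ x, |f x| ≤ C) : Integrable f μ :=
  (integrable_const C).mono' hf.aestronglyMeasurable (ae_of_all _ h)


lemma hoeffding_scalar {p : ℝ} (hp0 : 0 ≤ p) (hp1 : p ≤ 1) (h : ℝ) :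
    (1 - p) * Real.exp (-p * h) + p * Real.exp ((1 - p) * h) ≤ Real.exp (h ^ 2 / 8) := by
  set u : ℝ → ℝ := fun t => 1 - p + p * Real.exp t with hu_def
  have hu_pos : ∀ t, 0 < u t := by
    intro t
    simp only [hu_def]
    rcases eq_or_lt_of_le hp0 with h0 | h0
    · simp [← h0]
    · have : 0 < p * Real.exp t := mul_pos h0 (Real.exp_pos t)
      nlinarith [this]
  set φ : ℝ → ℝ := fun t => t ^ 2 / 8 + p * t - Real.log (u t) with hφ_def
  set ψ : ℝ → ℝ := fun t => t / 4 + p - p * Real.exp t / u t with hψ_def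
  have hu_deriv : ∀ t, HasDerivAt u (p * Real.exp t) t := by
    intro t
    exact ((Real.hasDerivAt_exp t).const_mul p).const_add (1 - p)
  have hφ_deriv : ∀ t, HasDerivAt φ (ψ t) t := by
    intro t
    have h1 : HasDerivAt (fun t : ℝ => t ^ 2 / 8 + p * t)
        (t / 4 + p) t := by
      have := ((hasDerivAt_pow 2 t).div_const 8).add ((hasDerivAt_id t).const_mul p)
      exact this.congr_deriv (by ring)
    have h2 : HasDerivAt (fun t => Real.log (u t)) (p * Real.exp t / u t) t :=
      (hu_deriv t).log (hu_pos t).ne'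
    exact h1.sub h2
  have hψ_deriv : ∀ t, HasDerivAt ψ
      (1 / 4 - p * Real.exp t * (1 - p) / (u t) ^ 2) t := by
    intro t
    have h1 : HasDerivAt (fun t : ℝ => t / 4 + p) (1 / 4) t := by
      simpa using ((hasDerivAt_id t).div_const 4).add_const p
    have h2 : HasDerivAt (fun t => p * Real.exp t / u t)
        ((p * Real.exp t * u t - p * Real.exp t * (p * Real.exp t)) / (u t) ^ 2) t :=
      ((Real.hasDerivAt_exp t).const_mul p).div (hu_deriv t) (hu_pos t).ne'
    have heq : (p * Real.exp t * u t - p * Real.exp t * (p * Real.exp t)) / (u t) ^ 2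
        = p * Real.exp t * (1 - p) / (u t) ^ 2 := by
      congr 1; simp only [hu_def]; ring
    rw [heq] at h2
    exact h1.sub h2
  have hψ_deriv_nonneg : ∀ t, 0 ≤ 1 / 4 - p * Real.exp t * (1 - p) / (u t) ^ 2 := by
    intro t
    have h4 : 4 * (p * Real.exp t * (1 - p)) ≤ (u t) ^ 2 := by
      have := sq_nonneg ((1 - p) - p * Real.exp t)
      simp only [hu_def]; nlinarith
    have hupos := (hu_pos t)
    rw [sub_nonneg, div_le_iff₀ (by positivity)]
    simp only [hu_def] at h4 ⊢
    nlinarith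
  have hψ_mono : Monotone ψ :=
    monotone_of_deriv_nonneg (fun t => (hψ_deriv t).differentiableAt)
      (fun t => by rw [(hψ_deriv t).deriv]; exact hψ_deriv_nonneg t)
  have hψ0 : ψ 0 = 0 := by simp [hψ_def, hu_def]
  have hφ_cont : Continuous φ := by
    have : Differentiable ℝ φ := fun t => (hφ_deriv t).differentiableAt
    exact this.continuous
  have hφ0 : φ 0 = 0 := by simp [hφ_def, hu_def]
  have hφ_nonneg : ∀ t, 0 ≤ φ t := by
    intro t
    rcases le_total 0 t with ht | ht
    · have : MonotoneOn φ (Set.Ici 0) := by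
        apply monotoneOn_of_deriv_nonneg (convex_Ici 0) hφ_cont.continuousOn
          (fun x _ => (hφ_deriv x).differentiableAt.differentiableWithinAt)
        intro x hx
        rw [(hφ_deriv x).deriv]
        have : ψ 0 ≤ ψ x := hψ_mono (le_of_lt (by simpa using hx))
        linarith [hψ0 ▸ this]
      have := this (Set.self_mem_Ici) (Set.mem_Ici.2 ht) ht
      linarith [hφ0 ▸ this]
    · have : AntitoneOn φ (Set.Iic 0) := by
        apply antitoneOn_of_deriv_nonpos (convex_Iic 0) hφ_cont.continuousOn
          (fun x _ => (hφ_deriv x).differentiableAt.differentiableWithinAt)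
        intro x hx
        rw [(hφ_deriv x).deriv]
        have : ψ x ≤ ψ 0 := hψ_mono (le_of_lt (by simpa using hx))
        linarith [hψ0 ▸ this]
      have := this (Set.mem_Iic.2 ht) (Set.self_mem_Iic) ht
      linarith [hφ0 ▸ this]
  -- conclude
  have key : Real.log (u h) ≤ h ^ 2 / 8 + p * h := by
    have := hφ_nonneg h; simp only [hφ_def] at this; linarith
  have hu_le : u h ≤ Real.exp (h ^ 2 / 8 + p * h) := by
    rw [← Real.exp_log (hu_pos h)]
    exact Real.exp_le_exp.2 key
  calc (1 - p) * Real.exp (-p * h) + p * Real.exp ((1 - p) * h)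
      = Real.exp (-p * h) * u h := by
        simp only [hu_def]
        rw [show (1 - p) * h = h + (-p * h) by ring, Real.exp_add]
        ring
    _ ≤ Real.exp (-p * h) * Real.exp (h ^ 2 / 8 + p * h) := by
        exact mul_le_mul_of_nonneg_left hu_le (Real.exp_pos _).le
    _ = Real.exp (h ^ 2 / 8) := by rw [← Real.exp_add]; ring_nf


lemma hoeffding_mgf {α : Type*} [MeasurableSpace α] (μ : Measure α) [IsProbabilityMeasure μ]
    {Y : α → ℝ} (hY : Measurable Y) {a b : ℝ} (hab : ∀ x, Y x ∈ Set.Icc a b)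
    (hmean : ∫ x, Y x ∂μ = 0) (t : ℝ) :
    ∫ x, Real.exp (t * Y x) ∂μ ≤ Real.exp (t ^ 2 * (b - a) ^ 2 / 8) := by
  have hne : Nonempty α := by
    by_contra hα
    rw [not_nonempty_iff] at hα
    have h1 : (μ Set.univ) = 1 := measure_univ
    rw [Set.eq_empty_of_isEmpty (Set.univ : Set α)] at h1
    simp at h1
  obtain ⟨x₀⟩ := hne
  have hYb : ∀ x, |Y x| ≤ |a| + |b| := by
    intro x
    obtain ⟨h1, h2⟩ := hab x
    rw [abs_le]
    constructor
    · have : -(|a| + |b|) ≤ a := by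
        have := abs_nonneg b; have := neg_abs_le a; linarith
      linarith
    · have : b ≤ |a| + |b| := by
        have := abs_nonneg a; have := le_abs_self b; linarith
      linarith
  have hYint : Integrable Y μ :=
    (integrable_const (|a| + |b|)).mono' hY.aestronglyMeasurable (ae_of_all _ hYb)
  have ha0 : a ≤ 0 := by
    have : ∫ _ : α, a ∂μ ≤ ∫ x, Y x ∂μ :=
      integral_mono (integrable_const a) hYint (fun x => (hab x).1)
    simpa [hmean] using this
  have hb0 : 0 ≤ b := by
    have : ∫ x, Y x ∂μ ≤ ∫ _ : α, b ∂μ :=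
      integral_mono hYint (integrable_const b) (fun x => (hab x).2)
    simpa [hmean] using this
  rcases eq_or_lt_of_le (ha0.trans hb0) with hab' | hab'
  · -- a = b = 0, Y ≡ 0
    have ha : a = 0 := le_antisymm ha0 (by rw [hab']; exact hb0)
    have hb : b = 0 := by rw [← hab', ha]
    have hY0 : ∀ x, Y x = 0 := fun x => le_antisymm (hb ▸ (hab x).2) (ha ▸ (hab x).1)
    simp only [hY0, mul_zero, Real.exp_zero, integral_const, probReal_univ,
      smul_eq_mul, mul_one]
    exact Real.one_le_exp (by positivity)
  · -- a < b
    have hba : 0 < b - a := sub_pos.2 hab'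
    have hexp_int : Integrable (fun x => Real.exp (t * Y x)) μ := by
      apply (integrable_const (Real.exp (|t| * (|a| + |b|)))).mono'
        (Real.measurable_exp.comp (hY.const_mul t)).aestronglyMeasurable
      refine ae_of_all _ fun x => ?_
      simp only [Function.comp_apply, Real.norm_eq_abs]
      rw [abs_of_pos (Real.exp_pos _), Real.exp_le_exp]
      calc t * Y x ≤ |t * Y x| := le_abs_self _
        _ = |t| * |Y x| := abs_mul t (Y x)
        _ ≤ |t| * (|a| + |b|) := by
            exact mul_le_mul_of_nonneg_left (hYb x) (abs_nonneg t)
    have hpt : ∀ x, Real.exp (t * Y x) ≤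
        (b * Real.exp (t * a) - a * Real.exp (t * b)) / (b - a)
          + (Real.exp (t * b) - Real.exp (t * a)) / (b - a) * Y x := by
      intro x
      obtain ⟨h1, h2⟩ := hab x
      have hw1 : 0 ≤ (b - Y x) / (b - a) := div_nonneg (by linarith) hba.le
      have hw2 : 0 ≤ (Y x - a) / (b - a) := by
        apply div_nonneg _ hba.le; linarith
      have hsum : (b - Y x) / (b - a) + (Y x - a) / (b - a) = 1 := by
        field_simp; ring
      have := convexOn_exp.2 (Set.mem_univ (t * a)) (Set.mem_univ (t * b)) hw1 hw2 hsum
      simp only [smul_eq_mul] at this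
      have harg : (b - Y x) / (b - a) * (t * a) + (Y x - a) / (b - a) * (t * b) = t * Y x := by
        field_simp; ring
      rw [harg] at this
      calc Real.exp (t * Y x)
          ≤ (b - Y x) / (b - a) * Real.exp (t * a)
            + (Y x - a) / (b - a) * Real.exp (t * b) := by simpa using this
        _ = (b * Real.exp (t * a) - a * Real.exp (t * b)) / (b - a)
            + (Real.exp (t * b) - Real.exp (t * a)) / (b - a) * Y x := by
            field_simp; ring
    have hint : ∫ x, Real.exp (t * Y x) ∂μ ≤
        (b * Real.exp (t * a) - a * Real.exp (t * b)) / (b - a) := by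
      have hrhs : Integrable (fun x =>
          (b * Real.exp (t * a) - a * Real.exp (t * b)) / (b - a)
          + (Real.exp (t * b) - Real.exp (t * a)) / (b - a) * Y x) μ :=
        (integrable_const _).add (hYint.const_mul _)
      have := integral_mono hexp_int hrhs hpt
      rwa [integral_add (integrable_const _) (hYint.const_mul _), integral_const,
        integral_const_mul, hmean, mul_zero, add_zero, probReal_univ,
        smul_eq_mul, one_mul] at this
    refine hint.trans ?_
    -- now the scalar bound
    set p := -a / (b - a) with hp_def
    have hp0 : 0 ≤ p := div_nonneg (by linarith) hba.le
    have hp1 : p ≤ 1 := by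
      rw [hp_def, div_le_one hba]; linarith
    have key := hoeffding_scalar hp0 hp1 (t * (b - a))
    have e1 : -p * (t * (b - a)) = t * a := by
      rw [hp_def]; field_simp
    have e2 : (1 - p) * (t * (b - a)) = t * b := by
      rw [hp_def]; field_simp; ring
    have e3 : (1 - p) = b / (b - a) := by
      rw [hp_def]; field_simp; ring
    rw [e1, e2] at key
    have e4 : (1 - p) * Real.exp (t * a) + p * Real.exp (t * b)
        = (b * Real.exp (t * a) - a * Real.exp (t * b)) / (b - a) := by
      rw [e3, hp_def]; field_simp; ring
    rw [e4] at key
    refine key.trans ?_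
    rw [Real.exp_le_exp, mul_pow]



section Mc
variable {α : Type*} [MeasurableSpace α] [Countable α] [MeasurableSingletonClass α] [Nonempty α]
  (ν : Measure α) [IsProbabilityMeasure ν]

lemma pi_sing {N : ℕ} (x : Fin N → α) :
    Measure.pi (fun _ : Fin N => ν) {x} = ∏ i, ν {x i} := by
  rw [← Set.univ_pi_singleton x, Measure.pi_pi]

lemma cons_map_pi (N : ℕ) :
    (ν.prod (Measure.pi fun _ : Fin N => ν)).map (fun q : α × (Fin N → α) => Fin.cons q.1 q.2)
      = Measure.pi (fun _ : Fin (N + 1) => ν) := by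
  apply meas_ext_sing
  intro x
  rw [Measure.map_apply (measurable_of_countable _) (measurableSet_singleton x)]
  have hpre : (fun q : α × (Fin N → α) => Fin.cons q.1 q.2) ⁻¹' {x}
      = {(x 0, Fin.tail x)} := by
    ext ⟨a, r⟩
    simp only [Set.mem_preimage, Set.mem_singleton_iff, Prod.mk.injEq]
    constructor
    · intro h
      rw [← h]
      simp [Fin.tail]
    · rintro ⟨h1, h2⟩
      rw [h1, h2]
      exact Fin.cons_self_tail x
  rw [hpre, show ({(x 0, Fin.tail x)} : Set (α × (Fin N → α)))
      = {x 0} ×ˢ {Fin.tail x} by simp, Measure.prod_prod, pi_sing, pi_sing,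
    Fin.prod_univ_succ]
  rfl

lemma mcdiarmid_mgf (B C t : ℝ) :
    ∀ (N : ℕ) (F : (Fin N → α) → ℝ),
      (∀ (x y : Fin N → α) (i : Fin N), (∀ j, j ≠ i → x j = y j) → |F x - F y| ≤ B) →
      (∀ x, |F x| ≤ C) →
      ∫ x, Real.exp (t * ((∫ y, F y ∂(Measure.pi fun _ : Fin N => ν)) - F x))
          ∂(Measure.pi fun _ : Fin N => ν)
        ≤ Real.exp (N * (t ^ 2 * B ^ 2) / 8) := by
  intro N
  induction N with
  | zero =>
    intro F _ _
    have hEF : (∫ y, F y ∂(Measure.pi fun _ : Fin 0 => ν)) = F default := by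
      rw [integral_unique, probReal_univ]
      simp
    rw [hEF]
    have : ∀ x : Fin 0 → α, F x = F default := fun x => by
      congr 1; exact Subsingleton.elim x default
    calc ∫ x, Real.exp (t * (F default - F x)) ∂(Measure.pi fun _ : Fin 0 => ν)
        = ∫ _x, (1:ℝ) ∂(Measure.pi fun _ : Fin 0 => ν) := by
          apply integral_congr_ae (ae_of_all _ fun x => ?_)
          rw [this x]; simp
      _ = 1 := by simp
      _ ≤ Real.exp ((0:ℕ) * (t ^ 2 * B ^ 2) / 8) := by norm_num
  | succ N ih =>
    intro F hB hC
    set Q := Measure.pi (fun _ : Fin N => ν) with hQ_def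
    set P := Measure.pi (fun _ : Fin (N + 1) => ν) with hP_def
    set G : (Fin N → α) → ℝ := fun r => ∫ a, F (Fin.cons a r) ∂ν with hG_def
    -- boundedness of G
    have hGC : ∀ r, |G r| ≤ C := by
      intro r
      rw [← Real.norm_eq_abs]
      calc ‖∫ a, F (Fin.cons a r) ∂ν‖ ≤ C * (ν Set.univ).toReal :=
        norm_integral_le_of_norm_le_const (ae_of_all _ fun a => by
          rw [Real.norm_eq_abs]; exact hC _)
      _ = C := by simp
    -- bounded differences for G
    have hGB : ∀ (r r' : Fin N → α) (j : Fin N), (∀ k, k ≠ j → r k = r' k) → |G r - G r'| ≤ B := by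
      intro r r' j hdiff
      have hsub : G r - G r' = ∫ a, (F (Fin.cons a r) - F (Fin.cons a r')) ∂ν := by
        rw [integral_sub (integrable_of_bdd ν (measurable_of_countable _) (fun a => hC _))
          (integrable_of_bdd ν (measurable_of_countable _) (fun a => hC _))]
      rw [hsub, ← Real.norm_eq_abs]
      calc ‖∫ a, (F (Fin.cons a r) - F (Fin.cons a r')) ∂ν‖ ≤ B * (ν Set.univ).toReal := by
            apply norm_integral_le_of_norm_le_const (ae_of_all _ fun a => ?_)
            rw [Real.norm_eq_abs]
            apply hB _ _ j.succ
            intro j' hj'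
            rcases Fin.eq_zero_or_eq_succ j' with rfl | ⟨k, rfl⟩
            · simp
            · simp only [Fin.cons_succ]
              exact hdiff k (fun hk => hj' (by rw [hk]))
      _ = B := by simp
    -- B ≥ 0
    obtain ⟨a₀⟩ := ‹Nonempty α›
    have hB0 : 0 ≤ B := by
      have := hB (fun _ => a₀) (fun _ => a₀) 0 (fun _ _ => rfl)
      simpa using this
    -- Fubini/transfer facts
    have hint_all : ∀ f : (Fin (N+1) → α) → ℝ, (∀ x, |f x| ≤ Real.exp (|t| * (C + C))) →
        True := fun _ _ => trivial
    have htrans : ∀ f : (Fin (N+1) → α) → ℝ, {D : ℝ} → (∀ x, |f x| ≤ D) →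
        ∫ x, f x ∂P = ∫ r, ∫ a, f (Fin.cons a r) ∂ν ∂Q := by
      intro f D hf
      rw [hP_def, ← cons_map_pi (ν := ν) N,
        integral_map (measurable_of_countable _).aemeasurable
          (measurable_of_countable _).aestronglyMeasurable]
      exact integral_prod_symm _ (integrable_of_bdd _ (measurable_of_countable _)
        (fun q => hf _))
    -- expectation transfer
    have hEFG : ∫ x, F x ∂P = ∫ r, G r ∂Q := htrans F hC
    -- inner bound via Hoeffding
    set EF := ∫ x, F x ∂P with hEF_def
    have hEFC : |EF| ≤ C := by
      rw [hEF_def, ← Real.norm_eq_abs]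
      calc ‖∫ x, F x ∂P‖ ≤ C * (P Set.univ).toReal :=
        norm_integral_le_of_norm_le_const (ae_of_all _ fun x => by
          rw [Real.norm_eq_abs]; exact hC _)
      _ = C := by simp
    have hinner : ∀ r, ∫ a, Real.exp (t * (EF - F (Fin.cons a r))) ∂ν
        ≤ Real.exp (t * (EF - G r)) * Real.exp (t ^ 2 * B ^ 2 / 8) := by
      intro r
      set Y : α → ℝ := fun a => F (Fin.cons a r) - G r with hY_def
      have hYmean : ∫ a, Y a ∂ν = 0 := by
        rw [hY_def]
        rw [integral_sub (integrable_of_bdd ν (measurable_of_countable _) (fun a => hC _))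
          (integrable_const _)]
        simp [hG_def]
      have hbdd : BddBelow (Set.range fun a => F (Fin.cons a r)) := by
        refine ⟨F (Fin.cons a₀ r) - B, ?_⟩
        rintro _ ⟨a, rfl⟩
        have := hB (Fin.cons a₀ r) (Fin.cons a r) 0 (fun j hj => by
          rcases Fin.eq_zero_or_eq_succ j with rfl | ⟨k, rfl⟩
          · exact absurd rfl hj
          · simp)
        rw [abs_sub_le_iff] at this
        linarith [this.1]
      set I := ⨅ a, F (Fin.cons a r) with hI_def
      have hIle : ∀ a, I ≤ F (Fin.cons a r) := fun a => ciInf_le hbdd a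
      have hleI : ∀ a, F (Fin.cons a r) ≤ I + B := by
        intro a
        have : F (Fin.cons a r) - B ≤ I := by
          apply le_ciInf
          intro a'
          have := hB (Fin.cons a r) (Fin.cons a' r) 0 (fun j hj => by
            rcases Fin.eq_zero_or_eq_succ j with rfl | ⟨k, rfl⟩
            · exact absurd rfl hj
            · simp)
          rw [abs_sub_le_iff] at this
          linarith [this.1]
        linarith
      have hYbounds : ∀ a, Y a ∈ Set.Icc (I - G r) (I + B - G r) := by
        intro a
        constructor
        · simp only [hY_def]; linarith [hIle a]
        · simp only [hY_def]; linarith [hleI a]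
      have hhoef := hoeffding_mgf ν (measurable_of_countable Y) hYbounds hYmean (-t)
      have heq : ∀ a, Real.exp (t * (EF - F (Fin.cons a r)))
          = Real.exp (t * (EF - G r)) * Real.exp (-t * Y a) := by
        intro a
        rw [← Real.exp_add]
        congr 1
        simp only [hY_def]
        ring
      calc ∫ a, Real.exp (t * (EF - F (Fin.cons a r))) ∂ν
          = ∫ a, Real.exp (t * (EF - G r)) * Real.exp (-t * Y a) ∂ν := by
            exact integral_congr_ae (ae_of_all _ heq)
        _ = Real.exp (t * (EF - G r)) * ∫ a, Real.exp (-t * Y a) ∂ν := integral_const_mul _ _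
        _ ≤ Real.exp (t * (EF - G r)) * Real.exp ((-t) ^ 2 * ((I + B - G r) - (I - G r)) ^ 2 / 8) := by
            apply mul_le_mul_of_nonneg_left hhoef (Real.exp_pos _).le
        _ = Real.exp (t * (EF - G r)) * Real.exp (t ^ 2 * B ^ 2 / 8) := by
            congr 2
            ring
    -- put it together
    have hKbd : ∀ x : Fin (N+1) → α, |Real.exp (t * (EF - F x))| ≤ Real.exp (|t| * (C + C)) := by
      intro x
      rw [abs_of_pos (Real.exp_pos _), Real.exp_le_exp]
      calc t * (EF - F x) ≤ |t * (EF - F x)| := le_abs_self _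
        _ = |t| * |EF - F x| := abs_mul _ _
        _ ≤ |t| * (C + C) := by
            apply mul_le_mul_of_nonneg_left _ (abs_nonneg t)
            calc |EF - F x| ≤ |EF| + |F x| := abs_sub _ _
              _ ≤ C + C := add_le_add hEFC (hC x)
    calc ∫ x, Real.exp (t * (EF - F x)) ∂P
        = ∫ r, ∫ a, Real.exp (t * (EF - F (Fin.cons a r))) ∂ν ∂Q :=
          htrans _ hKbd
      _ ≤ ∫ r, Real.exp (t * (EF - G r)) * Real.exp (t ^ 2 * B ^ 2 / 8) ∂Q := by
          apply integral_mono _ _ hinner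
          · apply integrable_of_bdd _ (measurable_of_countable _)
              (C := Real.exp (|t| * (C + C)))
            intro r
            rw [abs_of_nonneg (integral_nonneg (fun a => (Real.exp_pos _).le))]
            calc ∫ a, Real.exp (t * (EF - F (Fin.cons a r))) ∂ν
                ≤ ∫ _a, Real.exp (|t| * (C + C)) ∂ν := by
                  apply integral_mono (integrable_of_bdd _ (measurable_of_countable _)
                    (fun a => hKbd _)) (integrable_const _)
                  intro a
                  exact (le_abs_self _).trans (hKbd _)
              _ = Real.exp (|t| * (C + C)) := by simp
          · apply Integrable.mul_const
            apply integrable_of_bdd _ (measurable_of_countable _)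
              (C := Real.exp (|t| * (C + C)))
            intro r
            rw [abs_of_pos (Real.exp_pos _), Real.exp_le_exp]
            calc t * (EF - G r) ≤ |t * (EF - G r)| := le_abs_self _
              _ = |t| * |EF - G r| := abs_mul _ _
              _ ≤ |t| * (C + C) := by
                  apply mul_le_mul_of_nonneg_left _ (abs_nonneg t)
                  calc |EF - G r| ≤ |EF| + |G r| := abs_sub _ _
                    _ ≤ C + C := add_le_add hEFC (hGC r)
      _ = (∫ r, Real.exp (t * (EF - G r)) ∂Q) * Real.exp (t ^ 2 * B ^ 2 / 8) :=
          integral_mul_const _ _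
      _ ≤ Real.exp (N * (t ^ 2 * B ^ 2) / 8) * Real.exp (t ^ 2 * B ^ 2 / 8) := by
          apply mul_le_mul_of_nonneg_right _ (Real.exp_pos _).le
          have := ih G hGB hGC
          rw [← hEFG] at this
          exact this
      _ = Real.exp ((N + 1 : ℕ) * (t ^ 2 * B ^ 2) / 8) := by
          rw [← Real.exp_add]
          congr 1
          push_cast
          ring
end Mc


section Mc
variable {α : Type*} [MeasurableSpace α] [Countable α] [MeasurableSingletonClass α] [Nonempty α]
  (ν : Measure α) [IsProbabilityMeasure ν]

lemma mcdiarmid_tail (B C : ℝ) (hBpos : 0 < B) (N : ℕ) (hN : 0 < N)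
    (F : (Fin N → α) → ℝ)
    (hFB : ∀ (x y : Fin N → α) (i : Fin N), (∀ j, j ≠ i → x j = y j) → |F x - F y| ≤ B)
    (hFC : ∀ x, |F x| ≤ C) (ε : ℝ) (hε : 0 ≤ ε) :
    (Measure.pi fun _ : Fin N => ν)
        {x | ε ≤ (∫ y, F y ∂(Measure.pi fun _ : Fin N => ν)) - F x}
      ≤ ENNReal.ofReal (Real.exp (-2 * ε ^ 2 / (N * B ^ 2))) := by
  set P := Measure.pi (fun _ : Fin N => ν) with hP_def
  set X : (Fin N → α) → ℝ := fun x => (∫ y, F y ∂P) - F x with hX_def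
  set t : ℝ := 4 * ε / (N * B ^ 2) with ht_def
  have hNB : (0:ℝ) < N * B ^ 2 := by positivity
  have ht : 0 ≤ t := by positivity
  have hEFC : |∫ y, F y ∂P| ≤ C := by
    rw [← Real.norm_eq_abs]
    calc ‖∫ y, F y ∂P‖ ≤ C * (P Set.univ).toReal :=
      norm_integral_le_of_norm_le_const (ae_of_all _ fun x => by
        rw [Real.norm_eq_abs]; exact hFC _)
    _ = C := by simp
  have hXbd : ∀ x, |X x| ≤ C + C := by
    intro x
    calc |X x| ≤ |∫ y, F y ∂P| + |F x| := abs_sub _ _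
      _ ≤ C + C := add_le_add hEFC (hFC x)
  have h_int : Integrable (fun x => Real.exp (t * X x)) P := by
    apply integrable_of_bdd _ (measurable_of_countable _) (C := Real.exp (|t| * (C + C)))
    intro x
    rw [abs_of_pos (Real.exp_pos _), Real.exp_le_exp]
    calc t * X x ≤ |t * X x| := le_abs_self _
      _ = |t| * |X x| := abs_mul _ _
      _ ≤ |t| * (C + C) := mul_le_mul_of_nonneg_left (hXbd x) (abs_nonneg t)
  have hmgf : mgf X P t ≤ Real.exp (N * (t ^ 2 * B ^ 2) / 8) := by
    rw [mgf]
    exact mcdiarmid_mgf ν B C t N F hFB hFC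
  have htail := measure_ge_le_exp_mul_mgf (X := X) (μ := P) ε ht h_int
  have hcalc : Real.exp (-t * ε) * Real.exp (N * (t ^ 2 * B ^ 2) / 8)
      = Real.exp (-2 * ε ^ 2 / (N * B ^ 2)) := by
    rw [← Real.exp_add]
    congr 1
    rw [ht_def]
    field_simp
    ring
  have hle : (P {x | ε ≤ X x}).toReal ≤ Real.exp (-2 * ε ^ 2 / (N * B ^ 2)) := by
    calc (P {x | ε ≤ X x}).toReal ≤ Real.exp (-t * ε) * mgf X P t := htail
      _ ≤ Real.exp (-t * ε) * Real.exp (N * (t ^ 2 * B ^ 2) / 8) :=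
          mul_le_mul_of_nonneg_left hmgf (Real.exp_pos _).le
      _ = Real.exp (-2 * ε ^ 2 / (N * B ^ 2)) := hcalc
  have hfin : P {x | ε ≤ X x} ≠ ⊤ := measure_ne_top _ _
  rw [← ENNReal.ofReal_toReal hfin]
  exact ENNReal.ofReal_le_ofReal hle
end Mc


section Bias
variable {𝒳 : Type*} [DecidableEq 𝒳] [Countable 𝒳] [MeasurableSpace 𝒳]
  [MeasurableSingletonClass 𝒳] (ν : Measure 𝒳) [IsProbabilityMeasure ν]
  {n : ℕ} (hn : 2 ≤ n) (u : 𝒳)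

/-- count of u among the coordinates -/
def cnt (x : Fin n → 𝒳) (u : 𝒳) : ℕ := (univ.filter (fun i => x i = u)).card

lemma cnt_le (x : Fin n → 𝒳) : cnt x u ≤ n := by
  calc (univ.filter (fun i => x i = u)).card ≤ (univ : Finset (Fin n)).card :=
    card_le_card (filter_subset _ _)
  _ = n := card_univ.trans (Fintype.card_fin n)

lemma cnt_cast_eq_sum (x : Fin n → 𝒳) :
    ((cnt x u : ℝ)) = ∑ i, (if x i = u then (1:ℝ) else 0) := by
  rw [cnt]
  rw [Finset.card_filter]
  push_cast
  rfl

lemma cyl_meas (s : Finset (Fin n)) :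
    Measure.pi (fun _ : Fin n => ν) {x : Fin n → 𝒳 | ∀ i ∈ s, x i = u}
      = ν {u} ^ s.card := by
  have hset : {x : Fin n → 𝒳 | ∀ i ∈ s, x i = u}
      = Set.pi Set.univ (fun i => if i ∈ s then ({u} : Set 𝒳) else Set.univ) := by
    ext x
    simp only [Set.mem_setOf_eq, Set.mem_pi, Set.mem_univ, forall_true_left]
    constructor
    · intro h i
      split_ifs with hi
      · exact h i hi
      · trivial
    · intro h i hi
      have := h i
      rw [if_pos hi] at this
      exact this
  rw [hset, Measure.pi_pi]
  have : ∀ i : Fin n, ν (if i ∈ s then ({u} : Set 𝒳) else Set.univ)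
      = if i ∈ s then ν {u} else 1 := by
    intro i; split_ifs <;> simp
  simp_rw [this]
  rw [Finset.prod_ite_mem, Finset.univ_inter, Finset.prod_const]

-- the indicator functions
lemma chi_integral (i : Fin n) :
    ∫ x, (if x i = u then (1:ℝ) else 0) ∂(Measure.pi fun _ : Fin n => ν)
      = (ν {u}).toReal := by
  have h1 : (fun x : Fin n → 𝒳 => if x i = u then (1:ℝ) else 0)
      = Set.indicator {x : Fin n → 𝒳 | x i = u} (fun _ => (1:ℝ)) := by
    ext x; simp [Set.indicator, Set.mem_setOf_eq]
  rw [h1, integral_indicator_const _ (meas_all_sets _), smul_eq_mul, mul_one]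
  have h2 : {x : Fin n → 𝒳 | x i = u} = {x : Fin n → 𝒳 | ∀ j ∈ ({i} : Finset (Fin n)), x j = u} := by
    ext x; simp
  rw [h2, measureReal_def, cyl_meas, Finset.card_singleton, pow_one]

lemma chi_pair_integral (i j : Fin n) (hij : i ≠ j) :
    ∫ x, (if x i = u then (1:ℝ) else 0) * (if x j = u then (1:ℝ) else 0)
        ∂(Measure.pi fun _ : Fin n => ν)
      = (ν {u}).toReal ^ 2 := by
  have h1 : (fun x : Fin n → 𝒳 => (if x i = u then (1:ℝ) else 0) * (if x j = u then (1:ℝ) else 0))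
      = Set.indicator {x : Fin n → 𝒳 | x i = u ∧ x j = u} (fun _ => (1:ℝ)) := by
    ext x
    simp only [Set.indicator, Set.mem_setOf_eq]
    split_ifs <;> simp_all
  rw [h1, integral_indicator_const _ (meas_all_sets _), smul_eq_mul, mul_one]
  have h2 : {x : Fin n → 𝒳 | x i = u ∧ x j = u}
      = {x : Fin n → 𝒳 | ∀ k ∈ ({i, j} : Finset (Fin n)), x k = u} := by
    ext x
    simp only [Set.mem_setOf_eq, Finset.mem_insert, Finset.mem_singleton]
    constructor
    · rintro ⟨h1, h2⟩ k (rfl | rfl) <;> assumption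
    · intro h; exact ⟨h i (Or.inl rfl), h j (Or.inr rfl)⟩
  rw [h2, measureReal_def, cyl_meas, Finset.card_insert_of_notMem (by simpa using hij),
    Finset.card_singleton]
  rw [ENNReal.toReal_pow]

-- expectation of W
include hn in
lemma W_integral :
    ∫ x, ((cnt x u : ℝ) * ((n : ℝ) - cnt x u) / ((n : ℝ) * ((n : ℝ) - 1)))
        ∂(Measure.pi fun _ : Fin n => ν)
      = (ν {u}).toReal * (1 - (ν {u}).toReal) := by
  set P := Measure.pi (fun _ : Fin n => ν) with hP_def
  set θ := (ν {u}).toReal with hθ_def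
  set χ : Fin n → (Fin n → 𝒳) → ℝ := fun i x => if x i = u then (1:ℝ) else 0 with hχ_def
  have hχ_bd : ∀ i x, |χ i x| ≤ 1 := by
    intro i x; simp only [hχ_def]; split_ifs <;> simp
  have hχ_int : ∀ i, Integrable (χ i) P :=
    fun i => integrable_of_bdd _ (measurable_of_countable _) (hχ_bd i)
  have hχχ_int : ∀ i j, Integrable (fun x => χ i x * χ j x) P := by
    intro i j
    apply integrable_of_bdd _ (measurable_of_countable _) (C := 1)
    intro x
    rw [abs_mul]
    calc |χ i x| * |χ j x| ≤ 1 * 1 := mul_le_mul (hχ_bd i x) (hχ_bd j x) (abs_nonneg _) zero_le_one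
      _ = 1 := mul_one 1
  have hsum : ∀ x : Fin n → 𝒳, (cnt x u : ℝ) * ((n : ℝ) - cnt x u) / ((n : ℝ) * ((n : ℝ) - 1))
      = ((n : ℝ) * ∑ i, χ i x - ∑ i, ∑ j, χ i x * χ j x) / ((n : ℝ) * ((n : ℝ) - 1)) := by
    intro x
    rw [← Finset.sum_mul_sum, ← cnt_cast_eq_sum]
    ring_nf
  simp_rw [hsum]
  have hint1 : Integrable (fun x => (n : ℝ) * ∑ i, χ i x) P :=
    (integrable_finset_sum _ (fun i _ => hχ_int i)).const_mul _
  have hint2 : Integrable (fun x => ∑ i, ∑ j, χ i x * χ j x) P :=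
    integrable_finset_sum _ (fun i _ => integrable_finset_sum _ (fun j _ => hχχ_int i j))
  rw [integral_div, integral_sub hint1 hint2, integral_const_mul,
    integral_finset_sum _ (fun i _ => hχ_int i),
    integral_finset_sum _ (fun i _ => integrable_finset_sum _ (fun j _ => hχχ_int i j))]
  have hXi : ∀ i, ∫ x, χ i x ∂P = θ := fun i => chi_integral ν u i
  have hXij : ∀ i, ∫ x, ∑ j, χ i x * χ j x ∂P = θ + ((n:ℝ) - 1) * θ ^ 2 := by
    intro i
    rw [integral_finset_sum _ (fun j _ => hχχ_int i j)]
    have : ∀ j, ∫ x, χ i x * χ j x ∂P = if j = i then θ else θ ^ 2 := by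
      intro j
      split_ifs with hji
      · subst hji
        have : ∀ x, χ j x * χ j x = χ j x := by
          intro x; simp only [hχ_def]; split_ifs <;> norm_num
        simp_rw [this]
        exact hXi j
      · exact chi_pair_integral ν u i j (fun h => hji h.symm)
    simp_rw [this]
    have hsplit : ∀ j : Fin n, (if j = i then θ else θ ^ 2)
        = θ ^ 2 + (if j = i then θ - θ ^ 2 else 0) := by
      intro j; split_ifs <;> ring
    simp_rw [hsplit]
    rw [Finset.sum_add_distrib, Finset.sum_const,
      Finset.sum_ite_eq' univ i (fun _ => θ - θ ^ 2)]
    simp only [Finset.mem_univ, if_true, card_univ, Fintype.card_fin, nsmul_eq_mul]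
    ring
  simp_rw [hXi, hXij]
  rw [Finset.sum_const, Finset.sum_const, card_univ, Fintype.card_fin, nsmul_eq_mul,
    nsmul_eq_mul]
  have hn2 : (2:ℝ) ≤ (n:ℝ) := by exact_mod_cast hn
  have hne : (n:ℝ) * ((n:ℝ) - 1) ≠ 0 := by nlinarith
  rw [div_eq_iff hne]
  ring


section J
variable (k : ℕ)

include hn in
lemma q_mem (x : Fin n → 𝒳) :
    (cnt x u : ℝ) / n * (1 - (cnt x u : ℝ) / n) ∈ Set.Icc (0:ℝ) 1 := by
  have hn0 : (0:ℝ) < n := by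
    have : 0 < n := by omega
    exact_mod_cast this
  have hc0 : (0:ℝ) ≤ cnt x u := Nat.cast_nonneg _
  have hcn : (cnt x u : ℝ) ≤ n := by exact_mod_cast cnt_le u x
  have h1 : 0 ≤ (cnt x u : ℝ) / n := by positivity
  have h2 : (cnt x u : ℝ) / n ≤ 1 := by
    rw [div_le_one hn0]; exact hcn
  constructor
  · apply mul_nonneg h1; linarith
  · nlinarith

include hn in
lemma W_eq_q (x : Fin n → 𝒳) :
    (cnt x u : ℝ) * ((n : ℝ) - cnt x u) / ((n : ℝ) * ((n : ℝ) - 1))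
      = ((n:ℝ)/((n:ℝ)-1)) * ((cnt x u : ℝ) / n * (1 - (cnt x u : ℝ) / n)) := by
  have hn2 : (2:ℝ) ≤ (n:ℝ) := by exact_mod_cast hn
  have h1 : (n:ℝ) ≠ 0 := by linarith
  have h2 : (n:ℝ) - 1 ≠ 0 := by linarith
  field_simp

include hn in
lemma W_mem (x : Fin n → 𝒳) :
    (cnt x u : ℝ) * ((n : ℝ) - cnt x u) / ((n : ℝ) * ((n : ℝ) - 1)) ∈ Set.Icc (0:ℝ) 2 := by
  have hn2 : (2:ℝ) ≤ (n:ℝ) := by exact_mod_cast hn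
  have hc0 : (0:ℝ) ≤ cnt x u := Nat.cast_nonneg _
  have hcn : (cnt x u : ℝ) ≤ n := by exact_mod_cast cnt_le u x
  have hD : (0:ℝ) < (n:ℝ) * ((n:ℝ) - 1) := by nlinarith
  constructor
  · apply div_nonneg _ hD.le
    apply mul_nonneg hc0; linarith
  · rw [div_le_iff₀ hD]
    nlinarith

include hn in
lemma jensen_step (hk : 1 ≤ k) :
    ((ν {u}).toReal * (1 - (ν {u}).toReal)) ^ k
      ≤ ((n:ℝ)/((n:ℝ)-1)) ^ k *
        ∫ x, ((cnt x u : ℝ)/n * (1 - (cnt x u : ℝ)/n)) ^ k ∂(Measure.pi fun _ : Fin n => ν) := by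
  set P := Measure.pi (fun _ : Fin n => ν) with hP_def
  set W : (Fin n → 𝒳) → ℝ :=
    fun x => (cnt x u : ℝ) * ((n : ℝ) - cnt x u) / ((n : ℝ) * ((n : ℝ) - 1)) with hW_def
  have hWb : ∀ x, |W x| ≤ 2 := by
    intro x
    obtain ⟨h1, h2⟩ := W_mem hn u x
    rw [abs_le]; exact ⟨by linarith, h2⟩
  have hWint : Integrable W P := integrable_of_bdd _ (measurable_of_countable _) hWb
  have hWkint : Integrable (fun x => W x ^ k) P := by
    apply integrable_of_bdd _ (measurable_of_countable _) (C := 2 ^ k)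
    intro x
    rw [abs_pow]
    exact pow_le_pow_left₀ (abs_nonneg _) (hWb x) k
  haveI : NeZero P := ⟨IsProbabilityMeasure.ne_zero P⟩
  have hjen := (convexOn_pow k).map_average_le (continuous_pow k).continuousOn
    isClosed_Ici (ae_of_all _ (fun x => Set.mem_Ici.2 (W_mem hn u x).1)) hWint hWkint
  rw [average_eq_integral, average_eq_integral] at hjen
  have hEW := W_integral ν hn u
  rw [← hP_def] at hEW
  have h1 : ((ν {u}).toReal * (1 - (ν {u}).toReal)) ^ k ≤ ∫ x, W x ^ k ∂P := by
    calc ((ν {u}).toReal * (1 - (ν {u}).toReal)) ^ k = (∫ x, W x ∂P) ^ k := by rw [hEW]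
      _ ≤ ∫ x, W x ^ k ∂P := by simpa using hjen
  have h2 : ∀ x, W x ^ k
      = ((n:ℝ)/((n:ℝ)-1)) ^ k * ((cnt x u : ℝ)/n * (1 - (cnt x u : ℝ)/n)) ^ k := by
    intro x
    rw [hW_def]
    simp only
    rw [W_eq_q hn u x, mul_pow]
  calc ((ν {u}).toReal * (1 - (ν {u}).toReal)) ^ k ≤ ∫ x, W x ^ k ∂P := h1
    _ = ∫ x, ((n:ℝ)/((n:ℝ)-1)) ^ k * ((cnt x u : ℝ)/n * (1 - (cnt x u : ℝ)/n)) ^ k ∂P := by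
        exact integral_congr_ae (ae_of_all _ h2)
    _ = ((n:ℝ)/((n:ℝ)-1)) ^ k *
        ∫ x, ((cnt x u : ℝ)/n * (1 - (cnt x u : ℝ)/n)) ^ k ∂P := integral_const_mul _ _

include hn in
lemma int_qk_le (hk : 1 ≤ k) :
    ∫ x, ((cnt x u : ℝ)/n * (1 - (cnt x u : ℝ)/n)) ^ k ∂(Measure.pi fun _ : Fin n => ν)
      ≤ (ν {u}).toReal := by
  set P := Measure.pi (fun _ : Fin n => ν) with hP_def
  have hqint : Integrable (fun x => ((cnt x u : ℝ)/n * (1 - (cnt x u : ℝ)/n)) ^ k) P := by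
    apply integrable_of_bdd _ (measurable_of_countable _) (C := 1)
    intro x
    rw [abs_pow]
    apply pow_le_one₀ (abs_nonneg _)
    obtain ⟨h1, h2⟩ := q_mem hn u x
    rw [abs_le]; exact ⟨by linarith, h2⟩
  have hWint : Integrable (fun x : Fin n → 𝒳 =>
      (cnt x u : ℝ) * ((n : ℝ) - cnt x u) / ((n : ℝ) * ((n : ℝ) - 1))) P := by
    apply integrable_of_bdd _ (measurable_of_countable _) (C := 2)
    intro x
    obtain ⟨h1, h2⟩ := W_mem hn u x
    rw [abs_le]; exact ⟨by linarith, h2⟩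
  have hpt : ∀ x : Fin n → 𝒳, ((cnt x u : ℝ)/n * (1 - (cnt x u : ℝ)/n)) ^ k
      ≤ (cnt x u : ℝ) * ((n : ℝ) - cnt x u) / ((n : ℝ) * ((n : ℝ) - 1)) := by
    intro x
    obtain ⟨h1, h2⟩ := q_mem hn u x
    have hstep : ((cnt x u : ℝ)/n * (1 - (cnt x u : ℝ)/n)) ^ k
        ≤ (cnt x u : ℝ)/n * (1 - (cnt x u : ℝ)/n) :=
      pow_le_of_le_one h1 h2 (by omega)
    refine hstep.trans ?_
    rw [W_eq_q hn u x]
    have hn2 : (2:ℝ) ≤ (n:ℝ) := by exact_mod_cast hn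
    have hfac : (1:ℝ) ≤ (n:ℝ)/((n:ℝ)-1) := by
      rw [le_div_iff₀ (by linarith)]; linarith
    nlinarith
  calc ∫ x, ((cnt x u : ℝ)/n * (1 - (cnt x u : ℝ)/n)) ^ k ∂P
      ≤ ∫ x, (cnt x u : ℝ) * ((n : ℝ) - cnt x u) / ((n : ℝ) * ((n : ℝ) - 1)) ∂P :=
        integral_mono hqint hWint hpt
    _ = (ν {u}).toReal * (1 - (ν {u}).toReal) := W_integral ν hn u
    _ ≤ (ν {u}).toReal := by
        have h0 : 0 ≤ (ν {u}).toReal := ENNReal.toReal_nonneg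
        have h1 : (ν {u}).toReal ≤ 1 := by
          apply ENNReal.toReal_le_of_le_ofReal zero_le_one
          simpa using prob_le_one (μ := ν) (s := {u})
        nlinarith
end J
end Bias


section Poly
variable (c : ℕ → ℝ) (d : ℕ)

/-- the polynomial `f(q) = ∑ c_k (q(1-q))^k` -/
noncomputable def fpol (q : ℝ) : ℝ := ∑ k ∈ Icc 1 d, c k * (q * (1 - q)) ^ k

/-- its derivative -/
noncomputable def gpol (q : ℝ) : ℝ :=
  ∑ k ∈ Icc 1 d, c k * k * (q * (1 - q)) ^ (k - 1) * (1 - 2 * q)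

lemma hasDerivAt_fpol (q : ℝ) : HasDerivAt (fpol c d) (gpol c d q) q := by
  have h : ∀ k ∈ Icc 1 d, HasDerivAt (fun q : ℝ => c k * (q * (1 - q)) ^ k)
      (c k * k * (q * (1 - q)) ^ (k - 1) * (1 - 2 * q)) q := by
    intro k _
    have hbase : HasDerivAt (fun q : ℝ => q * (1 - q)) (1 - 2 * q) q := by
      have h := (hasDerivAt_id q).mul ((hasDerivAt_const q (1:ℝ)).sub (hasDerivAt_id q))
      simp only [id_eq] at h
      exact h.congr_deriv (by simp only [Pi.sub_apply, id_eq]; ring)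
    have := (hbase.pow k).const_mul (c k)
    exact this.congr_deriv (by ring)
  have := HasDerivAt.fun_sum h
  exact this

lemma fpol_zero : fpol c d 0 = 0 := by
  rw [fpol]
  apply Finset.sum_eq_zero
  intro k hk
  have hk1 : 1 ≤ k := (Finset.mem_Icc.1 hk).1
  rw [zero_mul, zero_pow (by omega), mul_zero]

lemma fpol_abs_le (q : ℝ) (hq : q ∈ Set.Icc (0:ℝ) 1) :
    |fpol c d q| ≤ ∑ k ∈ Icc 1 d, |c k| := by
  rw [fpol]
  refine (Finset.abs_sum_le_sum_abs _ _).trans (Finset.sum_le_sum fun k _ => ?_)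
  rw [abs_mul]
  have h1 : |(q * (1 - q)) ^ k| ≤ 1 := by
    rw [abs_pow]
    apply pow_le_one₀ (abs_nonneg _)
    obtain ⟨h0, h1⟩ := hq
    rw [abs_le]; constructor <;> nlinarith
  calc |c k| * |(q * (1 - q)) ^ k| ≤ |c k| * 1 :=
    mul_le_mul_of_nonneg_left h1 (abs_nonneg _)
  _ = |c k| := mul_one _

lemma fpol_nonneg (hc : ∀ k ∈ Icc 1 d, 0 ≤ c k) (q : ℝ) (hq : q ∈ Set.Icc (0:ℝ) 1) :
    0 ≤ fpol c d q := by
  apply Finset.sum_nonneg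
  intro k hk
  apply mul_nonneg (hc k hk)
  apply pow_nonneg
  obtain ⟨h0, h1⟩ := hq
  nlinarith

lemma gpol_abs_le (q : ℝ) (hq : q ∈ Set.Icc (0:ℝ) 1) :
    |gpol c d q| ≤ ∑ k ∈ Icc 1 d, |c k| * k := by
  rw [gpol]
  refine (Finset.abs_sum_le_sum_abs _ _).trans (Finset.sum_le_sum fun k _ => ?_)
  obtain ⟨h0, h1⟩ := hq
  rw [abs_mul, abs_mul, abs_mul]
  have hv : |(q * (1 - q)) ^ (k - 1)| ≤ 1 := by
    rw [abs_pow]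
    apply pow_le_one₀ (abs_nonneg _)
    rw [abs_le]; constructor <;> nlinarith
  have h2 : |1 - 2 * q| ≤ 1 := by rw [abs_le]; constructor <;> nlinarith
  have hk : |(k:ℝ)| = (k:ℝ) := abs_of_nonneg (Nat.cast_nonneg k)
  calc |c k| * |(k:ℝ)| * |(q * (1 - q)) ^ (k - 1)| * |1 - 2 * q|
      ≤ |c k| * |(k:ℝ)| * 1 * 1 := by
        apply mul_le_mul _ h2 (abs_nonneg _) (by positivity)
        apply mul_le_mul_of_nonneg_left hv (by positivity)
    _ = |c k| * (k:ℝ) := by rw [hk]; ring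

lemma gpol_reflect (q : ℝ) : gpol c d (1 - q) = -gpol c d q := by
  rw [gpol, gpol, ← Finset.sum_neg_distrib]
  apply Finset.sum_congr rfl
  intro k _
  rw [show (1 - q) * (1 - (1 - q)) = q * (1 - q) by ring]
  ring

/-- the sup appearing in `epsN` -/
noncomputable def Gsup : ℝ := ⨆ q ∈ Set.Icc (0:ℝ) 1, gpol c d q

lemma gsup_bdd : BddAbove (Set.range fun q : ℝ => ⨆ _ : q ∈ Set.Icc (0:ℝ) 1, gpol c d q) := by
  refine ⟨max (∑ k ∈ Icc 1 d, |c k| * k) 0, ?_⟩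
  rintro _ ⟨q, rfl⟩
  by_cases hq : q ∈ Set.Icc (0:ℝ) 1
  · simp only [ciSup_pos hq]
    exact le_max_of_le_left ((le_abs_self _).trans (gpol_abs_le c d q hq))
  · have h0 : (fun q : ℝ => ⨆ _ : q ∈ Set.Icc (0:ℝ) 1, gpol c d q) q = 0 := by
      simp only [hq]
      rw [iSup_of_empty', Real.sSup_empty]
    rw [h0]
    exact le_max_right _ _

lemma le_gsup (q : ℝ) (hq : q ∈ Set.Icc (0:ℝ) 1) : gpol c d q ≤ Gsup c d := by
  rw [Gsup]
  have h := le_ciSup (gsup_bdd c d) q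
  simp only [ciSup_pos hq] at h
  exact h

lemma abs_gpol_le_gsup (q : ℝ) (hq : q ∈ Set.Icc (0:ℝ) 1) : |gpol c d q| ≤ Gsup c d := by
  rcases le_total 0 (gpol c d q) with h | h
  · rw [abs_of_nonneg h]; exact le_gsup c d q hq
  · rw [abs_of_nonpos h, ← gpol_reflect]
    apply le_gsup
    obtain ⟨h0, h1⟩ := hq
    constructor <;> simp <;> linarith

lemma gsup_nonneg : 0 ≤ Gsup c d := by
  have h : gpol c d (1/2) = 0 := by
    rw [gpol]
    apply Finset.sum_eq_zero
    intro k _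
    norm_num
  have := le_gsup c d (1/2) (by norm_num)
  linarith [h ▸ this]

lemma gsup_eq_zero_imp (hc : ∀ k ∈ Icc 1 d, 0 ≤ c k) (hG : Gsup c d = 0) :
    ∀ k ∈ Icc 1 d, c k = 0 := by
  have h14 := le_gsup c d (1/4) (by norm_num)
  rw [hG, gpol] at h14
  have hterm : ∀ k ∈ Icc 1 d, 0 ≤ c k * k * ((1:ℝ)/4 * (1 - 1/4)) ^ (k - 1) * (1 - 2 * (1/4)) := by
    intro k hk
    have h1 : 1 ≤ k := (Finset.mem_Icc.1 hk).1
    have := hc k hk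
    positivity
  have hzero := (Finset.sum_eq_zero_iff_of_nonneg hterm).1 (le_antisymm h14 (Finset.sum_nonneg hterm))
  intro k hk
  have := hzero k hk
  have h1 : 1 ≤ k := (Finset.mem_Icc.1 hk).1
  have hpos : (0:ℝ) < (k:ℝ) * ((1:ℝ)/4 * (1 - 1/4)) ^ (k - 1) * (1 - 2 * (1/4)) := by
    have : (0:ℝ) < (k:ℝ) := by exact_mod_cast h1
    positivity
  rw [show c k * ↑k * ((1:ℝ)/4 * (1 - 1/4)) ^ (k - 1) * (1 - 2 * (1/4))
    = c k * ((k:ℝ) * ((1:ℝ)/4 * (1 - 1/4)) ^ (k - 1) * (1 - 2 * (1/4))) by ring] at this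
  rcases mul_eq_zero.1 this with h | h
  · exact h
  · exact absurd h hpos.ne'
end Poly

end Helpers



open MeasureTheory ProbabilityTheory Finset

/-- **Proposition 1 (McDiarmid concentration of the empirical sum).**
With probability at least `1 - δ₂`,
`∑_u ∑_{k=1}^d c_k (p_u(1-p_u))^k ≤ (n/(n-1))^d (∑_u ∑_{k=1}^d c_k (p̂_u(1-p̂_u))^k + ε_n)`. -/
theorem empirical_sum_concentration
    {𝒳 : Type*} [Countable 𝒳] [DecidableEq 𝒳]
    [MeasurableSpace 𝒳] [MeasurableSingletonClass 𝒳]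
    {Ω : Type*} [MeasureSpace Ω] [IsProbabilityMeasure (ℙ : Measure Ω)]
    (p : 𝒳 → ℝ) (hp0 : ∀ u, 0 ≤ p u) (hp1 : ∑' u, p u = 1)
    (n : ℕ) (hn : 2 ≤ n)
    (X : Fin n → Ω → 𝒳) (hmeas : ∀ i, Measurable (X i))
    (hindep : iIndepFun X ℙ)
    (hdist : ∀ i u, (ℙ {ω | X i ω = u}).toReal = p u)
    (m : ℕ) (hm : Even m) (hm0 : 0 < m) (d : ℕ) (hd : d = m / 2)
    (c : ℕ → ℝ) (hc : MomentIdentity n m d c)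
    (hcnonneg : ∀ k ∈ Finset.Icc 1 d, 0 ≤ c k)
    (δ₂ : ℝ) (hδ₂ : δ₂ ∈ Set.Ioo (0:ℝ) 1) :
    ℙ {ω | ∑' u, ∑ k ∈ Finset.Icc 1 d, c k * (p u * (1 - p u))^k ≤
        ((n:ℝ)/((n:ℝ)-1))^d * (empSum d c X ω + epsN n d c δ₂)}
      ≥ ENNReal.ofReal (1 - δ₂) := by
  classical
  have hXne : Nonempty 𝒳 := by
    by_contra h
    rw [not_nonempty_iff] at h
    rw [tsum_empty] at hp1
    norm_num at hp1
  have hn0 : 0 < n := by omega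
  have hp_sum : Summable p := by
    by_contra h
    rw [tsum_eq_zero_of_not_summable h] at hp1
    norm_num at hp1
  have hp_le_one : ∀ u, p u ≤ 1 := by
    intro u
    rw [← hp1]
    exact Summable.le_tsum hp_sum u (fun v _ => hp0 v)
  set T : Ω → (Fin n → 𝒳) := fun ω i => X i ω with hT_def
  have hT_meas : Measurable T := measurable_pi_lambda _ hmeas
  set i₀ : Fin n := ⟨0, hn0⟩ with hi₀
  set ν : Measure 𝒳 := Measure.map (X i₀) ℙ with hν_def
  haveI hνprob : IsProbabilityMeasure ν := Measure.isProbabilityMeasure_map (hmeas i₀).aemeasurable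
  have hXsing : ∀ i u, ℙ (X i ⁻¹' {u}) = ENNReal.ofReal (p u) := by
    intro i u
    have h1 : (ℙ (X i ⁻¹' {u})).toReal = p u := hdist i u
    rw [← h1, ENNReal.ofReal_toReal (measure_ne_top _ _)]
  have hν_sing : ∀ u, ν {u} = ENNReal.ofReal (p u) := by
    intro u
    rw [hν_def, Measure.map_apply (hmeas i₀) (measurableSet_singleton u)]
    exact hXsing i₀ u
  have hθ : ∀ u, (ν {u}).toReal = p u := fun u => by
    rw [hν_sing u]; exact ENNReal.toReal_ofReal (hp0 u)
  set P : Measure (Fin n → 𝒳) := Measure.pi (fun _ => ν) with hP_def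
  have hlaw : Measure.map T ℙ = P := by
    apply meas_ext_sing
    intro x
    rw [Measure.map_apply hT_meas (measurableSet_singleton x)]
    have hpre : T ⁻¹' {x} = ⋂ i, X i ⁻¹' {x i} := by
      ext ω
      simp [hT_def, funext_iff]
    rw [hpre, hindep.meas_iInter (fun i => ⟨{x i}, measurableSet_singleton _, rfl⟩),
      hP_def, pi_sing]
    exact Finset.prod_congr rfl fun i _ => by rw [hXsing i (x i), hν_sing]
  -- the function F on sample space
  set F : (Fin n → 𝒳) → ℝ := fun x => ∑' u, fpol c d ((cnt x u : ℝ)/n) with hF_def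
  have hqmem : ∀ (x : Fin n → 𝒳) u, ((cnt x u : ℝ)/n) ∈ Set.Icc (0:ℝ) 1 := by
    intro x u
    constructor
    · positivity
    · rw [div_le_one (by exact_mod_cast hn0)]
      exact_mod_cast cnt_le u x
  have hsupp : ∀ (x : Fin n → 𝒳) u, u ∉ Finset.image x Finset.univ →
      fpol c d ((cnt x u : ℝ)/n) = 0 := by
    intro x u hu
    have hc0 : cnt x u = 0 := by
      rw [cnt, Finset.card_eq_zero, Finset.filter_eq_empty_iff]
      intro i _
      intro hxi
      exact hu (Finset.mem_image.2 ⟨i, Finset.mem_univ i, hxi⟩)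
    rw [hc0]
    simpa using fpol_zero c d
  have hsummable_x : ∀ x : Fin n → 𝒳, Summable (fun u => fpol c d ((cnt x u : ℝ)/n)) :=
    fun x => summable_of_ne_finset_zero (hsupp x)
  set M₀ : ℝ := ∑ k ∈ Finset.Icc 1 d, |c k| with hM₀
  have hM₀0 : 0 ≤ M₀ := Finset.sum_nonneg fun k _ => abs_nonneg _
  have hFeq : ∀ x, F x = ∑ u ∈ Finset.image x Finset.univ, fpol c d ((cnt x u : ℝ)/n) :=
    fun x => tsum_eq_sum (hsupp x)
  have hFC : ∀ x, |F x| ≤ n * M₀ := by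
    intro x
    rw [hFeq x]
    calc |∑ u ∈ Finset.image x Finset.univ, fpol c d ((cnt x u : ℝ)/n)|
        ≤ ∑ u ∈ Finset.image x Finset.univ, |fpol c d ((cnt x u : ℝ)/n)| :=
          Finset.abs_sum_le_sum_abs _ _
      _ ≤ ∑ _u ∈ Finset.image x Finset.univ, M₀ :=
          Finset.sum_le_sum fun u _ => fpol_abs_le c d _ (hqmem x u)
      _ = (Finset.image x Finset.univ).card * M₀ := by rw [Finset.sum_const, nsmul_eq_mul]
      _ ≤ n * M₀ := by
          apply mul_le_mul_of_nonneg_right _ hM₀0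
          have h3 : (Finset.image x Finset.univ).card ≤ n := by
            simpa using Finset.card_image_le (f := x) (s := Finset.univ)
          exact_mod_cast h3
  have hF0 : ∀ x, 0 ≤ F x :=
    fun x => tsum_nonneg (fun u => fpol_nonneg c d hcnonneg _ (hqmem x u))
  have hempF : ∀ ω, empSum d c X ω = F (T ω) := by
    intro ω
    rw [empSum, hF_def]
    apply tsum_congr
    intro u
    rw [fpol]
    apply Finset.sum_congr rfl
    intro k _
    have hemp : emp X ω u = (cnt (T ω) u : ℝ)/n := rfl
    rw [hemp]
  -- epsilon facts
  set G : ℝ := Gsup c d with hG_def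
  set Cs : ℝ := ∑ k ∈ Finset.Icc 1 d, c k * k * ((k:ℝ)-1) / ((n:ℝ) * (2:ℝ)^(2*(k:ℤ)-3))
    with hCs_def
  have heps_eq : epsN n d c δ₂ = Real.sqrt ((2/(n:ℝ)) * Real.log (1/δ₂)) * (G + Cs) := rfl
  have hCs0 : 0 ≤ Cs := by
    apply Finset.sum_nonneg
    intro k hk
    have h1 : 1 ≤ k := (Finset.mem_Icc.1 hk).1
    have hck := hcnonneg k hk
    have hden : (0:ℝ) < (n:ℝ) * (2:ℝ)^(2*(k:ℤ)-3) := by positivity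
    apply div_nonneg _ hden.le
    have hk1 : (1:ℝ) ≤ (k:ℝ) := by exact_mod_cast h1
    exact mul_nonneg (mul_nonneg hck (by linarith)) (by linarith)
  have hlog0 : 0 ≤ Real.log (1/δ₂) := by
    apply Real.log_nonneg
    rw [le_one_div (by norm_num) hδ₂.1]
    linarith [hδ₂.2]
  have hG0 : 0 ≤ G := gsup_nonneg c d
  have hGzero_imp : G = 0 → ∀ k ∈ Finset.Icc 1 d, c k = 0 := by
    intro h0
    exact gsup_eq_zero_imp c d hcnonneg (hG_def.symm.trans h0)
  have hgpol_le : ∀ q ∈ Set.Icc (0:ℝ) 1, |gpol c d q| ≤ G := by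
    intro q hq
    rw [hG_def]
    exact abs_gpol_le_gsup c d q hq
  clear_value G Cs
  have heps0 : 0 ≤ epsN n d c δ₂ := by
    rw [heps_eq]
    exact mul_nonneg (Real.sqrt_nonneg _) (by linarith)
  have hn2 : (2:ℝ) ≤ (n:ℝ) := by exact_mod_cast hn
  have hA1 : (1:ℝ) ≤ (n:ℝ)/((n:ℝ)-1) := by
    rw [le_div_iff₀ (by linarith)]; linarith
  have hA0 : (0:ℝ) < ((n:ℝ)/((n:ℝ)-1))^d := by positivity
  rw [ge_iff_le]
  rcases eq_or_lt_of_le hG0 with hGzero | hGpos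
  · -- degenerate: all coefficients vanish
    have hck : ∀ k ∈ Finset.Icc 1 d, c k = 0 := hGzero_imp hGzero.symm
    have hset : {ω | ∑' u, ∑ k ∈ Finset.Icc 1 d, c k * (p u * (1 - p u))^k ≤
        ((n:ℝ)/((n:ℝ)-1))^d * (empSum d c X ω + epsN n d c δ₂)} = Set.univ := by
      apply Set.eq_univ_of_forall
      intro ω
      simp only [Set.mem_setOf_eq]
      have hLHS : ∑' u, ∑ k ∈ Finset.Icc 1 d, c k * (p u * (1 - p u))^k = 0 := by
        have hz : ∀ u : 𝒳, ∑ k ∈ Finset.Icc 1 d, c k * (p u * (1 - p u))^k = 0 :=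
          fun u => Finset.sum_eq_zero (fun k hk => by rw [hck k hk, zero_mul])
        simp [hz]
      rw [hLHS]
      apply mul_nonneg hA0.le
      rw [hempF ω]
      exact add_nonneg (hF0 _) heps0
    rw [hset, measure_univ]
    exact ENNReal.ofReal_le_one.2 (by linarith [hδ₂.1])
  · -- main case
    set B : ℝ := 2 * G / n with hB_def
    have hBpos : 0 < B := by
      rw [hB_def]
      have hh : (0:ℝ) < n := by exact_mod_cast hn0
      positivity
    clear_value B
    -- bounded differences
    have hcnt_row : ∀ (x y : Fin n → 𝒳) (i : Fin n), (∀ j, j ≠ i → x j = y j) → ∀ u,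
        (cnt x u : ℝ) - (cnt y u : ℝ)
          = (if x i = u then (1:ℝ) else 0) - (if y i = u then (1:ℝ) else 0) := by
      intro x y i hxy u
      rw [cnt_cast_eq_sum, cnt_cast_eq_sum, ← Finset.sum_sub_distrib]
      rw [Finset.sum_eq_single i]
      · intro j _ hji
        rw [hxy j hji, sub_self]
      · intro h; exact absurd (Finset.mem_univ i) h
    have hFB : ∀ (x y : Fin n → 𝒳) (i : Fin n), (∀ j, j ≠ i → x j = y j) → |F x - F y| ≤ B := by
      intro x y i hxy
      set U : Finset 𝒳 :=
        (Finset.image x Finset.univ ∪ Finset.image y Finset.univ) ∪ {x i, y i} with hU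
      have hFx : F x = ∑ u ∈ U, fpol c d ((cnt x u : ℝ)/n) := by
        apply tsum_eq_sum
        intro u hu
        exact hsupp x u (fun hmem => hu (Finset.mem_union_left _ (Finset.mem_union_left _ hmem)))
      have hFy : F y = ∑ u ∈ U, fpol c d ((cnt y u : ℝ)/n) := by
        apply tsum_eq_sum
        intro u hu
        exact hsupp y u (fun hmem => hu (Finset.mem_union_left _ (Finset.mem_union_right _ hmem)))
      rw [hFx, hFy, ← Finset.sum_sub_distrib]
      refine (Finset.abs_sum_le_sum_abs _ _).trans ?_
      have hterm : ∀ u ∈ U, |fpol c d ((cnt x u:ℝ)/n) - fpol c d ((cnt y u:ℝ)/n)|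
          ≤ (G/n) * |(if x i = u then (1:ℝ) else 0) - (if y i = u then (1:ℝ) else 0)| := by
        intro u _
        have hmvt := (convex_Icc (0:ℝ) 1).norm_image_sub_le_of_norm_hasDerivWithin_le
          (f := fpol c d) (f' := gpol c d) (C := G)
          (fun z hz => (hasDerivAt_fpol c d z).hasDerivWithinAt)
          (fun z hz => by rw [Real.norm_eq_abs]; exact hgpol_le z hz)
          (hqmem y u) (hqmem x u)
        rw [Real.norm_eq_abs, Real.norm_eq_abs] at hmvt
        have hnpos : (0:ℝ) < n := by exact_mod_cast hn0
        calc |fpol c d ((cnt x u:ℝ)/n) - fpol c d ((cnt y u:ℝ)/n)|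
            ≤ G * |(cnt x u:ℝ)/n - (cnt y u:ℝ)/n| := hmvt
          _ = (G/n) * |(if x i = u then (1:ℝ) else 0) - (if y i = u then (1:ℝ) else 0)| := by
              rw [div_sub_div_same, abs_div, abs_of_pos hnpos, hcnt_row x y i hxy u]
              ring
      refine (Finset.sum_le_sum hterm).trans ?_
      rw [← Finset.mul_sum]
      have hsum2 : ∑ u ∈ U, |(if x i = u then (1:ℝ) else 0) - (if y i = u then (1:ℝ) else 0)|
          ≤ 2 := by
        have hzero : ∀ u ∈ U, u ∉ ({x i, y i} : Finset 𝒳) →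
            |(if x i = u then (1:ℝ) else 0) - (if y i = u then (1:ℝ) else 0)| = 0 := by
          intro u _ hu
          simp only [Finset.mem_insert, Finset.mem_singleton, not_or] at hu
          obtain ⟨h1, h2⟩ := hu
          rw [if_neg (fun hh => h1 hh.symm), if_neg (fun hh => h2 hh.symm)]
          simp
        have hsub : ({x i, y i} : Finset 𝒳) ⊆ U := fun u hu => Finset.mem_union_right _ hu
        have heq2 : ∑ u ∈ U, |(if x i = u then (1:ℝ) else 0) - (if y i = u then (1:ℝ) else 0)|
            = ∑ u ∈ ({x i, y i} : Finset 𝒳),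
              |(if x i = u then (1:ℝ) else 0) - (if y i = u then (1:ℝ) else 0)| := by
          apply (Finset.sum_subset hsub ?_).symm
          intro u hu hnot
          exact hzero u hu hnot
        rw [heq2]
        have hle1 : ∀ u : 𝒳, |(if x i = u then (1:ℝ) else 0) - (if y i = u then (1:ℝ) else 0)|
            ≤ 1 := by
          intro u; split_ifs <;> norm_num
        calc ∑ u ∈ ({x i, y i} : Finset 𝒳),
              |(if x i = u then (1:ℝ) else 0) - (if y i = u then (1:ℝ) else 0)|
            ≤ ∑ _u ∈ ({x i, y i} : Finset 𝒳), (1:ℝ) := Finset.sum_le_sum fun u _ => hle1 u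
          _ = (({x i, y i} : Finset 𝒳).card : ℝ) := by rw [Finset.sum_const, nsmul_eq_mul, mul_one]
          _ ≤ 2 := by
              have := Finset.card_insert_le (x i) ({y i} : Finset 𝒳)
              have h2 : ({x i, y i} : Finset 𝒳).card ≤ 2 := by simpa using this
              exact_mod_cast h2
      have hGn : 0 ≤ G / (n:ℝ) := by positivity
      calc (G/(n:ℝ)) * ∑ u ∈ U, |(if x i = u then (1:ℝ) else 0) - (if y i = u then (1:ℝ) else 0)|
          ≤ (G/(n:ℝ)) * 2 := mul_le_mul_of_nonneg_left hsum2 hGn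
        _ = B := by rw [hB_def]; ring
    -- bias step
    set e : 𝒳 → ℝ := fun u => ∫ x, fpol c d ((cnt x u : ℝ)/n) ∂P with he_def
    have hqk_int : ∀ (u : 𝒳) (k : ℕ),
        Integrable (fun x : Fin n → 𝒳 => ((cnt x u:ℝ)/n * (1 - (cnt x u:ℝ)/n))^k) P := by
      intro u k
      apply integrable_of_bdd _ (measurable_of_countable _) (C := 1)
      intro x
      rw [abs_pow]
      apply pow_le_one₀ (abs_nonneg _)
      obtain ⟨h1, h2⟩ := q_mem hn u x
      rw [abs_le]; exact ⟨by linarith, h2⟩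
    have he_eq : ∀ u, e u = ∑ k ∈ Finset.Icc 1 d,
        c k * ∫ x, ((cnt x u:ℝ)/n * (1 - (cnt x u:ℝ)/n))^k ∂P := by
      intro u
      rw [he_def]
      simp only [fpol]
      rw [integral_finset_sum _ (fun k _ => (hqk_int u k).const_mul (c k))]
      exact Finset.sum_congr rfl fun k _ => integral_const_mul _ _
    have hint_nonneg : ∀ (u : 𝒳) (k : ℕ),
        0 ≤ ∫ x, ((cnt x u:ℝ)/n * (1 - (cnt x u:ℝ)/n))^k ∂P := by
      intro u k
      apply integral_nonneg
      intro x
      apply pow_nonneg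
      exact (q_mem hn u x).1
    have ht_le : ∀ u, ∑ k ∈ Finset.Icc 1 d, c k * (p u * (1 - p u))^k
        ≤ ((n:ℝ)/((n:ℝ)-1))^d * e u := by
      intro u
      rw [he_eq u, Finset.mul_sum]
      apply Finset.sum_le_sum
      intro k hk
      have hk1 : 1 ≤ k := (Finset.mem_Icc.1 hk).1
      have hkd : k ≤ d := (Finset.mem_Icc.1 hk).2
      have hjen := jensen_step ν hn u k hk1
      rw [hθ u] at hjen
      have hAkd : ((n:ℝ)/((n:ℝ)-1))^k ≤ ((n:ℝ)/((n:ℝ)-1))^d := pow_le_pow_right₀ hA1 hkd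
      calc c k * (p u * (1-p u))^k
          ≤ c k * (((n:ℝ)/((n:ℝ)-1))^k *
              ∫ x, ((cnt x u:ℝ)/n * (1 - (cnt x u:ℝ)/n))^k ∂P) :=
            mul_le_mul_of_nonneg_left hjen (hcnonneg k hk)
        _ ≤ c k * (((n:ℝ)/((n:ℝ)-1))^d *
              ∫ x, ((cnt x u:ℝ)/n * (1 - (cnt x u:ℝ)/n))^k ∂P) := by
            apply mul_le_mul_of_nonneg_left _ (hcnonneg k hk)
            exact mul_le_mul_of_nonneg_right hAkd (hint_nonneg u k)
        _ = ((n:ℝ)/((n:ℝ)-1))^d *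
              (c k * ∫ x, ((cnt x u:ℝ)/n * (1 - (cnt x u:ℝ)/n))^k ∂P) := by ring
    have he_nonneg : ∀ u, 0 ≤ e u := by
      intro u
      rw [he_eq]
      exact Finset.sum_nonneg fun k hk => mul_nonneg (hcnonneg k hk) (hint_nonneg u k)
    set M₂ : ℝ := ∑ k ∈ Finset.Icc 1 d, c k with hM₂
    have he_le : ∀ u, e u ≤ M₂ * p u := by
      intro u
      rw [he_eq u, hM₂, Finset.sum_mul]
      apply Finset.sum_le_sum
      intro k hk
      have hq := int_qk_le ν hn u k (Finset.mem_Icc.1 hk).1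
      rw [hθ u] at hq
      exact mul_le_mul_of_nonneg_left hq (hcnonneg k hk)
    have he_summable : Summable e :=
      Summable.of_nonneg_of_le he_nonneg he_le (hp_sum.mul_left M₂)
    have hpu01 : ∀ u : 𝒳, 0 ≤ p u * (1 - p u) ∧ p u * (1 - p u) ≤ 1 ∧ p u * (1 - p u) ≤ p u := by
      intro u
      have := hp0 u
      have := hp_le_one u
      refine ⟨by nlinarith, by nlinarith, by nlinarith⟩
    have ht_nonneg : ∀ u : 𝒳, 0 ≤ ∑ k ∈ Finset.Icc 1 d, c k * (p u * (1-p u))^k :=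
      fun u => Finset.sum_nonneg fun k hk =>
        mul_nonneg (hcnonneg k hk) (pow_nonneg (hpu01 u).1 k)
    have ht_le2 : ∀ u, ∑ k ∈ Finset.Icc 1 d, c k * (p u*(1-p u))^k ≤ M₂ * p u := by
      intro u
      rw [hM₂, Finset.sum_mul]
      apply Finset.sum_le_sum
      intro k hk
      have hk1 := (Finset.mem_Icc.1 hk).1
      obtain ⟨h01, h11, h2⟩ := hpu01 u
      have hp1' : (p u * (1-p u))^k ≤ p u * (1 - p u) := pow_le_of_le_one h01 h11 (by omega)
      exact mul_le_mul_of_nonneg_left (hp1'.trans h2) (hcnonneg k hk)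
    have ht_summable : Summable (fun u => ∑ k ∈ Finset.Icc 1 d, c k * (p u * (1-p u))^k) :=
      Summable.of_nonneg_of_le ht_nonneg ht_le2 (hp_sum.mul_left M₂)
    have hF_int : Integrable F P := integrable_of_bdd _ (measurable_of_countable _) hFC
    have hsum_e_le : ∑' u, e u ≤ ∫ x, F x ∂P := by
      apply Summable.tsum_le_of_sum_le he_summable
      intro A
      have h1 : ∑ u ∈ A, e u = ∫ x, ∑ u ∈ A, fpol c d ((cnt x u:ℝ)/n) ∂P := by
        rw [he_def]
        exact (integral_finset_sum A (fun u _ => integrable_of_bdd _ (measurable_of_countable _)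
          (C := M₀) (fun x => fpol_abs_le c d _ (hqmem x u)))).symm
      rw [h1]
      apply integral_mono (integrable_finset_sum A (fun u _ =>
        integrable_of_bdd _ (measurable_of_countable _) (C := M₀)
        (fun x => fpol_abs_le c d _ (hqmem x u)))) hF_int
      intro x
      exact Summable.sum_le_tsum A (fun u _ => fpol_nonneg c d hcnonneg _ (hqmem x u)) (hsummable_x x)
    have hbias : (∑' u, ∑ k ∈ Finset.Icc 1 d, c k * (p u * (1-p u))^k)
        ≤ ((n:ℝ)/((n:ℝ)-1))^d * ∫ x, F x ∂P := by
      calc ∑' u, ∑ k ∈ Finset.Icc 1 d, c k * (p u * (1-p u))^k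
          ≤ ∑' u, ((n:ℝ)/((n:ℝ)-1))^d * e u :=
            Summable.tsum_le_tsum ht_le ht_summable (he_summable.mul_left _)
        _ = ((n:ℝ)/((n:ℝ)-1))^d * ∑' u, e u := tsum_mul_left
        _ ≤ ((n:ℝ)/((n:ℝ)-1))^d * ∫ x, F x ∂P :=
            mul_le_mul_of_nonneg_left hsum_e_le hA0.le
    -- McDiarmid tail
    have htail := mcdiarmid_tail ν B (n*M₀) hBpos n hn0 F hFB hFC (epsN n d c δ₂) heps0
    have hexp : Real.exp (-2 * (epsN n d c δ₂)^2 / ((n:ℝ) * B^2)) ≤ δ₂ := by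
      have hs2 : Real.sqrt ((2/(n:ℝ)) * Real.log (1/δ₂)) ^ 2
          = (2/(n:ℝ)) * Real.log (1/δ₂) := by
        apply Real.sq_sqrt
        apply mul_nonneg _ hlog0
        positivity
      have he2 : (epsN n d c δ₂)^2 = (2/(n:ℝ)) * Real.log (1/δ₂) * (G + Cs)^2 := by
        rw [heps_eq, mul_pow, hs2]
      have hlogδ : Real.log δ₂ = -Real.log (1/δ₂) := by
        rw [one_div, Real.log_inv, neg_neg]
      have harg : -2 * (epsN n d c δ₂)^2 / ((n:ℝ)*B^2) ≤ Real.log δ₂ := by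
        rw [he2, hB_def, hlogδ]
        have hid : -2 * ((2/(n:ℝ)) * Real.log (1/δ₂) * (G + Cs)^2) / ((n:ℝ)*(2*G/(n:ℝ))^2)
            = -(Real.log (1/δ₂) * ((G+Cs)^2/G^2)) := by
          have hne : (n:ℝ) ≠ 0 := by linarith
          have hGne : G ≠ 0 := hGpos.ne'
          field_simp
        rw [hid]
        have h1 : 1 ≤ (G+Cs)^2/G^2 := by
          rw [le_div_iff₀ (pow_pos hGpos 2), one_mul]
          exact pow_le_pow_left₀ hG0 (by linarith) 2
        have h2 := le_mul_of_one_le_right hlog0 h1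
        linarith
      calc Real.exp (-2 * (epsN n d c δ₂)^2 / ((n:ℝ)*B^2))
          ≤ Real.exp (Real.log δ₂) := Real.exp_le_exp.2 harg
        _ = δ₂ := Real.exp_log hδ₂.1
    -- event transfer and conclusion
    set E' : Set (Fin n → 𝒳) := {x | ∑' u, ∑ k ∈ Finset.Icc 1 d, c k * (p u*(1-p u))^k ≤
        ((n:ℝ)/((n:ℝ)-1))^d * (F x + epsN n d c δ₂)} with hE'
    have hEset : {ω | ∑' u, ∑ k ∈ Finset.Icc 1 d, c k * (p u * (1 - p u))^k ≤
        ((n:ℝ)/((n:ℝ)-1))^d * (empSum d c X ω + epsN n d c δ₂)} = T ⁻¹' E' := by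
      ext ω
      simp only [Set.mem_setOf_eq, Set.mem_preimage, hE']
      rw [hempF ω]
    have hPmap : ℙ {ω | ∑' u, ∑ k ∈ Finset.Icc 1 d, c k * (p u * (1 - p u))^k ≤
        ((n:ℝ)/((n:ℝ)-1))^d * (empSum d c X ω + epsN n d c δ₂)} = P E' := by
      rw [hEset, ← hlaw, Measure.map_apply hT_meas (meas_all_sets E')]
    rw [hPmap]
    have hincl : E'ᶜ ⊆ {x | epsN n d c δ₂ ≤ (∫ y, F y ∂P) - F x} := by
      intro x hx
      simp only [hE', Set.mem_compl_iff, Set.mem_setOf_eq, not_le] at hx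
      simp only [Set.mem_setOf_eq]
      have h2 : ((n:ℝ)/((n:ℝ)-1))^d * (F x + epsN n d c δ₂)
          < ((n:ℝ)/((n:ℝ)-1))^d * ∫ y, F y ∂P := lt_of_lt_of_le hx hbias
      have h3 : F x + epsN n d c δ₂ < ∫ y, F y ∂P := (mul_lt_mul_iff_right₀ hA0).1 h2
      linarith
    have hP_bad : P E'ᶜ ≤ ENNReal.ofReal δ₂ := by
      refine (measure_mono hincl).trans (htail.trans ?_)
      exact ENNReal.ofReal_le_ofReal hexp
    have hsplit : P E' + P E'ᶜ = 1 := by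
      rw [measure_add_measure_compl (meas_all_sets E'), measure_univ]
    have h1 : ENNReal.ofReal (1 - δ₂) + ENNReal.ofReal δ₂ = 1 := by
      rw [← ENNReal.ofReal_add (by linarith [hδ₂.2]) hδ₂.1.le]
      norm_num
    have h2 : ENNReal.ofReal (1-δ₂) + ENNReal.ofReal δ₂ ≤ P E' + ENNReal.ofReal δ₂ := by
      rw [h1, ← hsplit]
      exact add_le_add le_rfl hP_bad
    exact (ENNReal.add_le_add_iff_right ENNReal.ofReal_ne_top).1 h2
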